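/- With g = 1/(F₁⋯F_r) as above, suppose complex numbers c_{jl} (symmetric in j,l) satisfy ∑_{j,l} c_{jl} fⱼᵏ fₗᵏ' = 0 for all pairs k ≤ k' (i.e., the corresponding quadric vanishes on the symmetric products of the sections). Then the constant-coefficient second-order operator ∑_{j,l} c_{jl} ∂²/∂a_j∂a_l annihilates g. -/

import Mathlib

open Finset

/-- The partial derivative `∂h/∂a_j` of a function of `N` complex variables. -/
noncomputable def pderiv' {N : ℕ} (j : Fin N) (h : (Fin N → ℂ) → ℂ) :
    (Fin N → ℂ) → ℂ :=
  fun a => fderiv ℂ h a (Pi.single j 1)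

/-- Swap sums: pull a double sum out of a weighted double sum. -/
lemma sum_swap_aux {N r : ℕ} (c : Fin N → Fin N → ℂ) (u : Fin r → ℂ)
    (w w' : Fin r → Fin N → ℂ) :
    ∑ j, ∑ l, c j l * (∑ k, u k * (w k j * w' k l))
      = ∑ k, u k * (∑ j, ∑ l, c j l * w k j * w' k l) := by
  calc ∑ j, ∑ l, c j l * (∑ k, u k * (w k j * w' k l))
      = ∑ j, ∑ k, ∑ l, c j l * (u k * (w k j * w' k l)) := by
        refine Finset.sum_congr rfl fun j _ => ?_
        simp only [Finset.mul_sum]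
        exact Finset.sum_comm
    _ = ∑ k, ∑ j, ∑ l, c j l * (u k * (w k j * w' k l)) := Finset.sum_comm
    _ = ∑ k, u k * (∑ j, ∑ l, c j l * w k j * w' k l) := by
        refine Finset.sum_congr rfl fun k _ => ?_
        simp only [Finset.mul_sum]
        refine Finset.sum_congr rfl fun j _ => Finset.sum_congr rfl fun l _ => by ring

/-- Swap sums: pull a double sum over `k, k'` out of a weighted double sum over `j, l`. -/
lemma sum_swap_aux2 {N r : ℕ} (c : Fin N → Fin N → ℂ) (u : Fin r → Fin r → ℂ)
    (f : Fin r → Fin N → ℂ) :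
    ∑ j, ∑ l, c j l * (∑ k, ∑ k', u k k' * (f k j * f k' l))
      = ∑ k, ∑ k', u k k' * (∑ j, ∑ l, c j l * f k j * f k' l) := by
  calc ∑ j, ∑ l, c j l * (∑ k, ∑ k', u k k' * (f k j * f k' l))
      = ∑ j, ∑ l, ∑ k, c j l * (∑ k', u k k' * (f k j * f k' l)) := by
        refine Finset.sum_congr rfl fun j _ => Finset.sum_congr rfl fun l _ => ?_
        rw [Finset.mul_sum]
    _ = ∑ j, ∑ k, ∑ l, c j l * (∑ k', u k k' * (f k j * f k' l)) :=
        Finset.sum_congr rfl fun j _ => Finset.sum_comm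
    _ = ∑ k, ∑ j, ∑ l, c j l * (∑ k', u k k' * (f k j * f k' l)) := Finset.sum_comm
    _ = ∑ k, ∑ k', ∑ j, ∑ l, c j l * (u k k' * (f k j * f k' l)) := by
        refine Finset.sum_congr rfl fun k _ => ?_
        calc ∑ j, ∑ l, c j l * (∑ k', u k k' * (f k j * f k' l))
            = ∑ j, ∑ k', ∑ l, c j l * (u k k' * (f k j * f k' l)) := by
              refine Finset.sum_congr rfl fun j _ => ?_
              simp only [Finset.mul_sum]
              exact Finset.sum_comm
          _ = ∑ k', ∑ j, ∑ l, c j l * (u k k' * (f k j * f k' l)) := Finset.sum_comm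
    _ = ∑ k, ∑ k', u k k' * (∑ j, ∑ l, c j l * f k j * f k' l) := by
        refine Finset.sum_congr rfl fun k _ => Finset.sum_congr rfl fun k' _ => ?_
        simp only [Finset.mul_sum]
        refine Finset.sum_congr rfl fun j _ => Finset.sum_congr rfl fun l _ => by ring

/-- **Quadrics vanishing on the sections annihilate `g = 1/(F₁ ⋯ F_r)`.**
If the symmetric coefficients `c j l` satisfy `∑_{j,l} c j l * f_j^k * f_l^{k'} = 0`
for all `k ≤ k'`, then `∑_{j,l} c j l ∂²/∂a_j∂a_l` annihilates `g`. -/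
theorem quadric_annihilates_product_inverse (N r : ℕ)
    (f : Fin r → Fin N → ℂ)
    (F : Fin r → (Fin N → ℂ) → ℂ) (hF : ∀ k a, F k a = ∑ i, a i * f k i)
    (g : (Fin N → ℂ) → ℂ) (hg : ∀ a, g a = (∏ k, F k a)⁻¹)
    (c : Fin N → Fin N → ℂ) (hsymm : ∀ j l, c j l = c l j)
    (hker : ∀ k k' : Fin r, k ≤ k' → ∑ j, ∑ l, c j l * f k j * f k' l = 0)
    (a : Fin N → ℂ) (ha : ∀ k, F k a ≠ 0) :
    ∑ j, ∑ l, c j l * pderiv' j (pderiv' l g) a = 0 := by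
  classical
  -- The linear maps `M k` with `M k x = F k x`.
  set M : Fin r → (Fin N → ℂ) →L[ℂ] ℂ :=
    fun k => ∑ i, f k i • (ContinuousLinearMap.proj i : (Fin N → ℂ) →L[ℂ] ℂ) with hMdef
  have hMapp : ∀ k x, M k x = F k x := by
    intro k x
    rw [hF]
    simp [hMdef, ContinuousLinearMap.sum_apply, mul_comm]
  have hMs : ∀ k (j : Fin N), M k (Pi.single j 1) = f k j := by
    intro k j
    simp [hMdef, ContinuousLinearMap.sum_apply, Pi.single_apply]
  have hFeq : ∀ k, F k = fun y => M k y := fun k => funext fun y => (hMapp k y).symm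
  have hFd : ∀ k x, HasFDerivAt (F k) (M k) x := by
    intro k x; rw [hFeq k]; exact (M k).hasFDerivAt
  -- The derivative of `(F k ·)⁻¹`.
  set I : Fin r → (Fin N → ℂ) → ((Fin N → ℂ) →L[ℂ] ℂ) :=
    fun k x => ((1 : ℂ →L[ℂ] ℂ).smulRight (-(F k x ^ 2)⁻¹)).comp (M k) with hIdef
  have hIapp : ∀ k x w, I k x w = M k w * -(F k x ^ 2)⁻¹ := by
    intro k x w
    simp [hIdef, ContinuousLinearMap.smulRight_apply, smul_eq_mul]
  have hinvd : ∀ k x, F k x ≠ 0 → HasFDerivAt (fun y => (F k y)⁻¹) (I k x) x :=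
    fun k x hx => (hasFDerivAt_inv hx).comp x (hFd k x)
  -- `g` as a product of inverses.
  set P : (Fin N → ℂ) → ℂ := fun x => ∏ k, (F k x)⁻¹ with hPdef
  have hgP : g = P := funext fun x => by
    rw [hg, hPdef]; exact (Finset.prod_inv_distrib _).symm
  set S : Fin N → (Fin N → ℂ) → ℂ := fun j x => ∑ k, (F k x)⁻¹ * f k j with hSdef
  set DP : (Fin N → ℂ) → ((Fin N → ℂ) →L[ℂ] ℂ) :=
    fun x => ∑ k, (∏ j ∈ Finset.univ.erase k, (F j x)⁻¹) • I k x with hDPdef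
  have hPd : ∀ x, (∀ k, F k x ≠ 0) → HasFDerivAt P (DP x) x := by
    intro x hx
    exact HasFDerivAt.finset_prod (fun k _ => hinvd k x (hx k))
  have hDPapp : ∀ x (j : Fin N), DP x (Pi.single j 1) = -(P x * S j x) := by
    intro x j
    have : -(P x * S j x) = ∑ k, -(P x * ((F k x)⁻¹ * f k j)) := by
      rw [hSdef]
      simp only [Finset.mul_sum, Finset.sum_neg_distrib]
    rw [this, hDPdef]
    simp only [ContinuousLinearMap.sum_apply, ContinuousLinearMap.smul_apply, hIapp, hMs,
      smul_eq_mul]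
    refine Finset.sum_congr rfl fun k _ => ?_
    have hPk : P x = (F k x)⁻¹ * ∏ j' ∈ Finset.univ.erase k, (F j' x)⁻¹ :=
      (Finset.mul_prod_erase Finset.univ _ (Finset.mem_univ k)).symm
    rw [hPk, sq, mul_inv]
    ring
  -- First derivative identity on the open set where all `F k` are nonzero.
  set φ : Fin N → (Fin N → ℂ) → ℂ := fun l x => -(P x * S l x) with hφdef
  have key1 : ∀ (l : Fin N) x, (∀ k, F k x ≠ 0) → pderiv' l g x = φ l x := by
    intro l x hx
    show fderiv ℂ g x (Pi.single l 1) = φ l x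
    rw [hgP, (hPd x hx).fderiv, hDPapp x l]
  -- Open neighborhood of `a`.
  have hU : IsOpen {x : Fin N → ℂ | ∀ k, F k x ≠ 0} := by
    have : {x : Fin N → ℂ | ∀ k, F k x ≠ 0} = ⋂ k, (F k) ⁻¹' ({0}ᶜ) := by
      ext x; simp [Set.mem_iInter]
    rw [this]
    refine isOpen_iInter_of_finite fun k => ?_
    have hc : Continuous (F k) := by rw [hFeq k]; exact (M k).continuous
    exact isOpen_compl_singleton.preimage hc
  have heq : ∀ l : Fin N, pderiv' l g =ᶠ[nhds a] φ l := by
    intro l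
    exact Filter.eventually_of_mem (hU.mem_nhds ha) fun x hx => key1 l x hx
  -- Second derivative.
  set DS : Fin N → ((Fin N → ℂ) →L[ℂ] ℂ) := fun l => ∑ k, f k l • I k a with hDSdef
  have hSd : ∀ l, HasFDerivAt (S l) (DS l) a :=
    fun l => HasFDerivAt.fun_sum fun k _ => (hinvd k a (ha k)).mul_const (f k l)
  have hDSapp : ∀ l j : Fin N, DS l (Pi.single j 1) = ∑ k, f k l * (f k j * -(F k a ^ 2)⁻¹) := by
    intro l j
    simp [hDSdef, ContinuousLinearMap.sum_apply, hIapp, hMs, smul_eq_mul, mul_assoc]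
  have hφd : ∀ l, HasFDerivAt (φ l) (-(P a • DS l + S l a • DP a)) a :=
    fun l => ((hPd a ha).mul (hSd l)).neg
  -- The explicit second partial derivatives.
  have key2 : ∀ j l : Fin N, pderiv' j (pderiv' l g) a
      = (∑ k, (P a * (F k a ^ 2)⁻¹) * (f k j * f k l))
        + ∑ k, ∑ k', (P a * ((F k a)⁻¹ * (F k' a)⁻¹)) * (f k j * f k' l) := by
    intro j l
    show fderiv ℂ (pderiv' l g) a (Pi.single j 1) = _
    rw [(heq l).fderiv_eq, (hφd l).fderiv]
    simp only [ContinuousLinearMap.neg_apply, ContinuousLinearMap.add_apply,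
      ContinuousLinearMap.smul_apply, hDSapp, hDPapp, smul_eq_mul]
    have h1 : ∑ k, f k l * (f k j * -(F k a ^ 2)⁻¹)
        = -∑ k, (F k a ^ 2)⁻¹ * (f k j * f k l) := by
      rw [← Finset.sum_neg_distrib]
      exact Finset.sum_congr rfl fun k _ => by ring
    have h2 : S j a * S l a
        = ∑ k, ∑ k', ((F k a)⁻¹ * (F k' a)⁻¹) * (f k j * f k' l) := by
      rw [hSdef]
      rw [Finset.sum_mul_sum]
      exact Finset.sum_congr rfl fun k _ => Finset.sum_congr rfl fun k' _ => by ring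
    rw [h1]
    have h3 : P a * -∑ k, (F k a ^ 2)⁻¹ * (f k j * f k l)
        = -∑ k, (P a * (F k a ^ 2)⁻¹) * (f k j * f k l) := by
      rw [mul_neg, Finset.mul_sum, neg_inj]
      exact Finset.sum_congr rfl fun k _ => by ring
    have h4 : S l a * -(P a * S j a)
        = -∑ k, ∑ k', (P a * ((F k a)⁻¹ * (F k' a)⁻¹)) * (f k j * f k' l) := by
      have : S l a * -(P a * S j a) = -(P a * (S j a * S l a)) := by ring
      rw [this, h2, Finset.mul_sum, neg_inj]
      refine Finset.sum_congr rfl fun k _ => ?_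
      rw [Finset.mul_sum]
      exact Finset.sum_congr rfl fun k' _ => by ring
    rw [h3, h4]
    ring
  -- Full kernel hypothesis by symmetry.
  have hker' : ∀ k k' : Fin r, ∑ j, ∑ l, c j l * f k j * f k' l = 0 := by
    intro k k'
    rcases le_total k k' with h | h
    · exact hker k k' h
    · rw [Finset.sum_comm, ← hker k' k h]
      refine Finset.sum_congr rfl fun b _ => Finset.sum_congr rfl fun a' _ => ?_
      rw [hsymm]
      ring
  -- Conclusion.
  calc ∑ j, ∑ l, c j l * pderiv' j (pderiv' l g) a
      = (∑ j, ∑ l, c j l * (∑ k, (P a * (F k a ^ 2)⁻¹) * (f k j * f k l)))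
        + ∑ j, ∑ l, c j l * (∑ k, ∑ k', (P a * ((F k a)⁻¹ * (F k' a)⁻¹)) * (f k j * f k' l)) := by
        simp only [key2, mul_add, Finset.sum_add_distrib]
    _ = 0 := by
        rw [sum_swap_aux c (fun k => P a * (F k a ^ 2)⁻¹) f f,
          sum_swap_aux2 c (fun k k' => P a * ((F k a)⁻¹ * (F k' a)⁻¹)) f]
        simp [hker']
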